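/- Let r = Σ_i s_i ⊗ t_i = f⊗e + e⊗f − 2k⊗k ∈ sl₂ ⊗ sl₂ and ω(k,e) = −ω(e,k) = x ∈ F₀ (zero on other basis pairs). Consider P = Σ_{i,j} ( − s̄_i ⊗ ω(s_j,t_i) ⊗ t̄_j − s̄_i ⊗ s̄_j ⊗ ω(t_j,t_i) ) + Σ_i ( s̄_i ⊗ 1 ⊗ t̄_i + s̄_i ⊗ t̄_i ⊗ 1 ) + c ⊗ r̄, an element of a triple tensor product of the spaces F₁⋊_α sl₂ and F₀, where c ∈ ℂ·1 ⊂ F₀ and r̄ = Σ_i s̄_i ⊗ t̄_i. Then P₁₂₃ + P₂₃₁ + P₃₁₂ = 0 (sum over the cyclic permutations of tensor factors) if and only if c = −2·1. -/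

import Mathlib

open Polynomial
open scoped TensorProduct

namespace Stmt19

/-- The basis `e, f, k` of `sl₂(ℂ)` (matrix model). -/
noncomputable def eMat : Matrix (Fin 2) (Fin 2) ℂ := !![0, 0; 1, 0]
noncomputable def fMat : Matrix (Fin 2) (Fin 2) ℂ := !![0, -1; 0, 0]
noncomputable def kMat : Matrix (Fin 2) (Fin 2) ℂ := !![-(1/2 : ℂ), 0; 0, 1/2]

/-- The tensor factors `s_i, t_i` and coefficients of
`r = f⊗e + e⊗f − 2k⊗k = Σ_i co_i · s_i ⊗ t_i`. -/
noncomputable def s : Fin 3 → Matrix (Fin 2) (Fin 2) ℂ := ![fMat, eMat, kMat]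
noncomputable def t : Fin 3 → Matrix (Fin 2) (Fin 2) ℂ := ![eMat, fMat, kMat]
noncomputable def co : Fin 3 → ℂ := ![1, 1, -2]

/-- The map `ω : Λ²sl₂ → F₀` with `ω(k,e) = −ω(e,k) = x`, zero on the other
basis pairs. -/
noncomputable def w (A B : Matrix (Fin 2) (Fin 2) ℂ) : Polynomial ℂ :=
  C (2 * A 1 1 * B 1 0 - 2 * A 1 0 * B 1 1) * X

/-- The common ambient space `V = F₀ ⊕ (F₁ ⋊_α sl₂)` containing both `F₀`
and `F₁ ⋊_α sl₂` (the latter modelled as pairs `(1-form, sl₂-matrix)`). -/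
abbrev V := Polynomial ℂ × (Polynomial ℂ × Matrix (Fin 2) (Fin 2) ℂ)

/-- The embedding of `F₀` into `V`. -/
noncomputable def f0 (p : Polynomial ℂ) : V := (p, 0)

/-- The embedding `X ↦ X̄ = (0,X)` of `sl₂` into `F₁ ⋊_α sl₂ ⊂ V`. -/
noncomputable def gbar (A : Matrix (Fin 2) (Fin 2) ℂ) : V := (0, (0, A))

/-- The element `P = Σ_{i,j}(−s̄_i ⊗ ω(s_j,t_i) ⊗ t̄_j − s̄_i ⊗ s̄_j ⊗ ω(t_j,t_i))
+ Σ_i (s̄_i ⊗ 1 ⊗ t̄_i + s̄_i ⊗ t̄_i ⊗ 1) + c ⊗ r̄`, written with an arbitrary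
placement `ins` of the three tensor slots (so that the cyclic permutations
`P₁₂₃`, `P₂₃₁`, `P₃₁₂` are obtained by permuting the slots). -/
noncomputable def P (c : Polynomial ℂ) (ins : V → V → V → V ⊗[ℂ] (V ⊗[ℂ] V)) :
    V ⊗[ℂ] (V ⊗[ℂ] V) :=
  (∑ i : Fin 3, ∑ j : Fin 3, (co i * co j) •
      (- ins (gbar (s i)) (f0 (w (s j) (t i))) (gbar (t j))
       - ins (gbar (s i)) (gbar (s j)) (f0 (w (t j) (t i)))))
  + ∑ i : Fin 3, co i •
      (ins (gbar (s i)) (f0 1) (gbar (t i))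
       + ins (gbar (s i)) (gbar (t i)) (f0 1)
       + ins (f0 c) (gbar (s i)) (gbar (t i)))

lemma f0_smul (γ : ℂ) (p : Polynomial ℂ) : f0 (γ • p) = γ • f0 p := by
  simp [f0, Prod.smul_def]

noncomputable def Q : V ⊗[ℂ] (V ⊗[ℂ] V) :=
    (f0 1 ⊗ₜ[ℂ] (gbar fMat ⊗ₜ[ℂ] gbar eMat) + gbar fMat ⊗ₜ[ℂ] (f0 1 ⊗ₜ[ℂ] gbar eMat)
      + gbar fMat ⊗ₜ[ℂ] (gbar eMat ⊗ₜ[ℂ] f0 1))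
  + (f0 1 ⊗ₜ[ℂ] (gbar eMat ⊗ₜ[ℂ] gbar fMat) + gbar eMat ⊗ₜ[ℂ] (f0 1 ⊗ₜ[ℂ] gbar fMat)
      + gbar eMat ⊗ₜ[ℂ] (gbar fMat ⊗ₜ[ℂ] f0 1))
  - (2:ℂ) • (f0 1 ⊗ₜ[ℂ] (gbar kMat ⊗ₜ[ℂ] gbar kMat) + gbar kMat ⊗ₜ[ℂ] (f0 1 ⊗ₜ[ℂ] gbar kMat)
      + gbar kMat ⊗ₜ[ℂ] (gbar kMat ⊗ₜ[ℂ] f0 1))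

set_option maxHeartbeats 2000000 in
lemma expand (γ : ℂ) :
    P (C γ) (fun a b d => a ⊗ₜ[ℂ] (b ⊗ₜ[ℂ] d))
      + P (C γ) (fun a b d => d ⊗ₜ[ℂ] (a ⊗ₜ[ℂ] b))
      + P (C γ) (fun a b d => b ⊗ₜ[ℂ] (d ⊗ₜ[ℂ] a)) = (γ + 2) • Q := by
  have hC : ∀ δ : ℂ, (C δ : Polynomial ℂ) = δ • (1 : Polynomial ℂ) := by
    intro δ; rw [Polynomial.smul_eq_C_mul, mul_one]
  have h0 : f0 0 = 0 := by simp [f0]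
  have hneg : f0 (-X) = -f0 X := by simp [f0, Prod.ext_iff]
  simp only [P, Q, Fin.sum_univ_three, s, t, co, w, eMat, fMat, kMat,
    Matrix.cons_val_zero, Matrix.cons_val_one, Matrix.head_cons, Matrix.cons_val',
    Matrix.cons_val_fin_one, Matrix.empty_val', Matrix.head_fin_const, Matrix.cons_val_two]
  norm_num
  rw [hC γ]
  simp only [h0, hneg, f0_smul, TensorProduct.tmul_smul, ← TensorProduct.smul_tmul',
    TensorProduct.zero_tmul, TensorProduct.tmul_zero, TensorProduct.neg_tmul,
    TensorProduct.tmul_neg, smul_smul]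
  module

noncomputable def cst : V →ₗ[ℂ] ℂ where
  toFun v := v.1.coeff 0
  map_add' := by intros; simp
  map_smul' := by intros; simp

noncomputable def ent (i j : Fin 2) : V →ₗ[ℂ] ℂ where
  toFun v := v.2.2 i j
  map_add' := by intros; rfl
  map_smul' := by intros; rfl

noncomputable def Φ : V ⊗[ℂ] (V ⊗[ℂ] V) →ₗ[ℂ] ℂ :=
  LinearMap.mul' ℂ ℂ ∘ₗ
    TensorProduct.map cst
      (LinearMap.mul' ℂ ℂ ∘ₗ TensorProduct.map (ent 1 0) (ent 0 1))

lemma PhiQ : Φ Q = -1 := by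
  simp [Φ, Q, cst, ent, f0, gbar, eMat, fMat, kMat]
  change (0 : ℂ) * 0 + 1 * (-1) - 2 * (0 * 0) = -1
  norm_num

/-- `P₁₂₃ + P₂₃₁ + P₃₁₂ = 0` (sum over cyclic permutations of the tensor
slots) if and only if `c = −2·1`, for `c ∈ ℂ·1 ⊂ F₀`. -/
theorem coherence_iff_c_eq_neg_two (c : Polynomial ℂ) (hc : ∃ γ : ℂ, c = C γ) :
    (P c (fun a b d => a ⊗ₜ[ℂ] (b ⊗ₜ[ℂ] d))
      + P c (fun a b d => d ⊗ₜ[ℂ] (a ⊗ₜ[ℂ] b))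
      + P c (fun a b d => b ⊗ₜ[ℂ] (d ⊗ₜ[ℂ] a)) = 0)
      ↔ c = C (-2) := by
  obtain ⟨γ, rfl⟩ := hc
  rw [expand γ]
  constructor
  · intro h
    have h2 := congrArg Φ h
    rw [Φ.map_smul, PhiQ, Φ.map_zero, smul_eq_mul] at h2
    have : γ = -2 := by linear_combination -h2
    rw [this]
  · intro h
    have : γ = -2 := Polynomial.C_injective h
    rw [this]
    norm_num

end Stmt19
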